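/- Let 0 < a ≤ b and for each i ∈ ℕ let γᵢ : ℝ → ℝ² be a C¹, 1-periodic map with constant speed ‖γᵢ'(s)‖ = Lᵢ for all s, where Lᵢ ∈ [a, b], with γᵢ(0) = 0, and satisfying the separation bound: for all s, t ∈ ℝ and each σ ∈ {+1, −1}, ‖γᵢ(t) − (γᵢ(s) + σ·J(γᵢ'(s))/Lᵢ)‖ ≥ 1. Then there is a subsequence of (γᵢ) converging uniformly on ℝ, together with its derivatives, to a C¹, 1-periodic map γ of constant speed L ∈ [a, b] with γ(0) = 0 which also satisfies the same separation bound (for all s, t and σ ∈ {+1, −1}, ‖γ(t) − (γ(s) + σ·J(γ'(s))/L)‖ ≥ 1). -/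

import Mathlib

noncomputable section
open Filter Set

/-- Rotation by π/2 in the plane: `J (x, y) = (-y, x)`. -/
def J (v : EuclideanSpace ℝ (Fin 2)) : EuclideanSpace ℝ (Fin 2) := WithLp.toLp 2 ![-(v 1), v 0]

local notation "E2" => EuclideanSpace ℝ (Fin 2)
local notation "⟪" x ", " y "⟫" => @inner ℝ _ _ x y

lemma inner_coords (x y : E2) : ⟪x, y⟫ = x 0 * y 0 + x 1 * y 1 := by
  simp [PiLp.inner_apply, Fin.sum_univ_two, RCLike.inner_apply, mul_comm]

lemma norm_sq_coords (x : E2) : ‖x‖^2 = x 0 * x 0 + x 1 * x 1 := by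
  rw [← real_inner_self_eq_norm_sq, inner_coords]

lemma J_sub (u v : E2) : J u - J v = J (u - v) := by
  ext i
  fin_cases i
  · show (J u) 0 - (J v) 0 = _
    show -(u 1) - -(v 1) = -((u - v) 1)
    simp [PiLp.sub_apply]
    ring
  · show (J u) 1 - (J v) 1 = _
    show u 0 - v 0 = (u - v) 0
    simp [PiLp.sub_apply]

lemma norm_J (v : E2) : ‖J v‖ = ‖v‖ := by
  have h1 : ‖J v‖^2 = ‖v‖^2 := by
    rw [norm_sq_coords, norm_sq_coords]
    show (-(v 1)) * (-(v 1)) + v 0 * v 0 = _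
    ring
  nlinarith [norm_nonneg (J v), norm_nonneg v]

lemma J_continuous : Continuous J := by
  have : LipschitzWith 1 J := by
    refine LipschitzWith.of_dist_le_mul fun u v => ?_
    rw [dist_eq_norm, dist_eq_norm, J_sub, norm_J]
    simp
  exact this.continuous

lemma pyth (c w : E2) : ⟪c, w⟫^2 + ⟪c, J w⟫^2 = ‖c‖^2 * ‖w‖^2 := by
  rw [inner_coords, inner_coords, norm_sq_coords, norm_sq_coords]
  show (c 0 * w 0 + c 1 * w 1)^2 + (c 0 * (-(w 1)) + c 1 * (w 0))^2 = _
  ring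

lemma chord_bound {c w : E2} {L : ℝ} (hL : 0 < L) (hw : ‖w‖ = L)
    (h1 : 1 ≤ ‖c - L⁻¹ • J w‖) (h2 : 1 ≤ ‖c + L⁻¹ • J w‖) :
    |⟪c, J w⟫| ≤ L * ‖c‖^2 / 2 := by
  have hJw : ‖J w‖ = L := by
    have : ‖J w‖^2 = ‖w‖^2 := by
      rw [norm_sq_coords, norm_sq_coords]; show (-(w 1)) * (-(w 1)) + w 0 * w 0 = _; ring
    nlinarith [norm_nonneg (J w), norm_nonneg w]
  set n : E2 := L⁻¹ • J w with hn
  have hnorm : ‖n‖ = 1 := by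
    rw [hn, norm_smul, hJw, Real.norm_eq_abs, abs_inv, abs_of_pos hL, inv_mul_cancel₀ hL.ne']
  have e1 : ‖c - n‖^2 = ‖c‖^2 - 2 * ⟪c, n⟫ + 1 := by
    rw [norm_sub_sq_real, hnorm]; ring
  have e2 : ‖c + n‖^2 = ‖c‖^2 + 2 * ⟪c, n⟫ + 1 := by
    rw [norm_add_sq_real, hnorm]; ring
  have q1 : (1:ℝ) ≤ ‖c - n‖^2 := by nlinarith
  have q2 : (1:ℝ) ≤ ‖c + n‖^2 := by nlinarith
  have hin : ⟪c, J w⟫ = L * ⟪c, n⟫ := by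
    rw [hn, real_inner_smul_right]; field_simp
  rw [abs_le]
  constructor <;> rw [hin] <;> nlinarith [abs_nonneg ⟪c, n⟫]

set_option maxHeartbeats 1000000 in
lemma tangent_close {c w : E2} {L : ℝ} (hL : 0 < L) (hw : ‖w‖ = L) (hc : c ≠ 0)
    (hd : ‖c‖ ≤ 1) (hpos : 0 < ⟪c, w⟫) (hch : |⟪c, J w⟫| ≤ L * ‖c‖^2 / 2) :
    ‖w - (L / ‖c‖) • c‖ ≤ L * ‖c‖ := by
  set d := ‖c‖ with hdd
  have hd0 : 0 < d := norm_pos_iff.mpr hc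
  set X := ⟪c, w⟫ with hX
  set Y := ⟪c, J w⟫ with hY
  have hpy : X^2 + Y^2 = d^2 * L^2 := by rw [hX, hY, pyth, hw]
  have hY2 : Y^2 ≤ L^2 * d^4 / 4 := by
    have h := pow_le_pow_left₀ (abs_nonneg Y) hch 2
    rw [sq_abs] at h
    calc Y^2 ≤ (L * d^2 / 2)^2 := h
    _ = L^2 * d^4 / 4 := by ring
  have hXlb : L * d * (1 - d^2/2) ≤ X := by
    by_contra hcon
    push_neg at hcon
    have hB : 0 < L * d * (1 - d^2/2) := by nlinarith
    have h2 : X^2 < (L * d * (1 - d^2/2))^2 := by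
      nlinarith [mul_pos (sub_pos.mpr hcon) (by linarith : (0:ℝ) < L * d * (1 - d^2/2) + X)]
    have h3 : (L * d * (1 - d^2/2))^2 ≤ L^2 * d^2 * (1 - d^2/4) := by
      nlinarith [sq_nonneg (L*d*d), sq_nonneg (L*d), mul_pos hL hd0]
    nlinarith
  have hsq : ‖w - (L / d) • c‖^2 ≤ (L * d)^2 := by
    have e : ‖w - (L / d) • c‖^2 = ‖w‖^2 - 2 * (L/d) * X + (L/d)^2 * d^2 := by
      rw [norm_sub_sq_real, real_inner_smul_right, norm_smul, real_inner_comm]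
      rw [Real.norm_eq_abs, abs_of_pos (by positivity : (0:ℝ) < L / d)]
      ring
    rw [e, hw]
    have h1 : (L/d)^2 * d^2 = L^2 := by field_simp
    have h2 : 2 * (L/d) * X ≥ 2 * (L/d) * (L * d * (1 - d^2/2)) := by
      have : (0:ℝ) < L / d := by positivity
      nlinarith
    have h3 : 2 * (L/d) * (L * d * (1 - d^2/2)) = 2 * L^2 * (1 - d^2/2) := by field_simp
    nlinarith
  have := norm_nonneg (w - (L / d) • c)
  nlinarith [mul_pos hL hd0]

lemma norm_tri (a b c : E2) : ‖a - c‖ ≤ ‖a - b‖ + ‖b - c‖ := by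
  simpa [dist_eq_norm] using dist_triangle a b c

lemma inner_lower {x y : E2} {L r : ℝ} (hx : ‖x‖ = L) (hy : ‖y‖ = L)
    (h : ‖x - y‖ ≤ r) : L^2 - r^2/2 ≤ ⟪x, y⟫ := by
  have e : ‖x - y‖^2 = ‖x‖^2 - 2 * ⟪x, y⟫ + ‖y‖^2 := norm_sub_sq_real x y
  rw [hx, hy] at e
  have h2 : ‖x - y‖^2 ≤ r^2 := by
    nlinarith [mul_self_le_mul_self (norm_nonneg (x - y)) h]
  linarith

set_option maxHeartbeats 1000000 in
lemma local_lipschitz {γ : ℝ → E2} {L : ℝ} (hL : 0 < L)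
    (hd : ∀ x, HasDerivAt γ (deriv γ x) x) (hdc : Continuous (deriv γ))
    (hspeed : ∀ x, ‖deriv γ x‖ = L)
    (hch : ∀ s t : ℝ, |⟪γ t - γ s, J (deriv γ s)⟫| ≤ L * ‖γ t - γ s‖^2 / 2) :
    ∀ s t : ℝ, s ≤ t → t - s ≤ 1/(4*L) → ‖deriv γ t - deriv γ s‖ ≤ 2*L^2*(t-s) := by
  intro s t hst hts
  set F := deriv γ with hF
  set δ : ℝ := 1/(4*L) with hδdef
  set K : ℝ := 2*L^2 with hKdef
  have hδ : 0 < δ := by positivity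
  have hKδ : K * δ = L/2 := by rw [hKdef, hδdef]; field_simp; ring
  have hLδ : L * δ = 1/4 := by rw [hδdef]; field_simp
  have hK0 : 0 < K := by positivity
  set T : Set ℝ := {r | r ∈ Icc s (s+δ) ∧ ∀ u ∈ Icc s r, ‖F u - F s‖ ≤ K*(u-s)} with hT
  have hsT : s ∈ T := by
    refine ⟨⟨le_refl s, by linarith⟩, fun u hu => ?_⟩
    have : u = s := le_antisymm hu.2 hu.1
    simp [this]
  have hbdd : BddAbove T := ⟨s+δ, fun r hr => hr.1.2⟩
  set m : ℝ := sSup T with hm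
  have hsm : s ≤ m := le_csSup hbdd hsT
  have hmδ : m ≤ s + δ := csSup_le ⟨s, hsT⟩ (fun r hr => hr.1.2)
  -- the bound holds on [s, m)
  have hlt : ∀ u, s ≤ u → u < m → ‖F u - F s‖ ≤ K*(u-s) := by
    intro u hsu hum
    by_cases hub : ∃ r ∈ T, u < r
    · obtain ⟨r, hrT, hur⟩ := hub
      exact hrT.2 u ⟨hsu, hur.le⟩
    · push_neg at hub
      have : m ≤ u := csSup_le ⟨s, hsT⟩ hub
      linarith
  -- and at m, by continuity
  have hmT : m ∈ T := by
    refine ⟨⟨hsm, hmδ⟩, fun u hu => ?_⟩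
    rcases lt_or_eq_of_le hu.2 with h | h
    · exact hlt u hu.1 h
    · rcases eq_or_lt_of_le hu.1 with h' | h'
      · simp [← h']
      · have t1 : Filter.Tendsto (fun x => ‖F x - F s‖) (nhdsWithin u (Iio u)) (nhds ‖F u - F s‖) :=
          ((hdc.sub continuous_const).norm.tendsto u).mono_left nhdsWithin_le_nhds
        have t2 : Filter.Tendsto (fun x => K*(x-s)) (nhdsWithin u (Iio u)) (nhds (K*(u-s))) :=
          ((continuous_const.mul (continuous_id.sub continuous_const)).tendsto u).mono_left
            nhdsWithin_le_nhds
        refine le_of_tendsto_of_tendsto t1 t2 ?_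
        filter_upwards [Ico_mem_nhdsLT h'] with x hx
        exact hlt x hx.1 (h ▸ hx.2)
  have hmain : s + δ ∈ T := by
    rcases eq_or_lt_of_le hmδ with heq | hlt2
    · rw [← heq]; exact hmT
    · exfalso
      obtain ⟨ε, hε0, hεball⟩ :=
        Metric.continuousAt_iff.mp (hdc.continuousAt (x := m)) (L/8) (by positivity)
      set t' : ℝ := min (m + ε/2) (s+δ) with ht'
      have hmt' : m < t' := lt_min (by linarith) hlt2
      have ht'δ : t' ≤ s + δ := min_le_right _ _
      have hst' : s ≤ t' := le_trans hsm hmt'.le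
      have hnear : ∀ x, m ≤ x → x ≤ t' → ‖F x - F m‖ ≤ L/8 := by
        intro x h1 h2
        have hd : dist x m < ε := by
          rw [Real.dist_eq, abs_of_nonneg (by linarith)]
          have : x ≤ m + ε/2 := le_trans h2 (min_le_left _ _)
          linarith
        have := hεball hd
        rw [dist_eq_norm] at this
        linarith [this.le]
      have hmbound : ∀ x ∈ Icc s m, ‖F x - F s‖ ≤ L/2 := by
        intro x hx
        calc ‖F x - F s‖ ≤ K * (x - s) := hmT.2 x hx
        _ ≤ K * δ := by nlinarith [hx.2]
        _ = L/2 := hKδ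
      have h58 : ∀ x ∈ Icc s t', ‖F x - F s‖ ≤ 5*L/8 := by
        intro x hx
        by_cases hxm : x ≤ m
        · linarith [hmbound x ⟨hx.1, hxm⟩]
        · push_neg at hxm
          have h1 := hnear x hxm.le hx.2
          have h2 := hmbound m ⟨hsm, le_refl m⟩
          have h3 := norm_tri (F x) (F m) (F s)
          linarith
      -- the bound extends to every u ∈ (m, t'], so t' ∈ T
      have hext : ∀ u ∈ Icc s t', ‖F u - F s‖ ≤ K * (u - s) := by
        intro u hu
        by_cases hum : u ≤ m
        · exact hmT.2 u ⟨hu.1, hum⟩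
        · push_neg at hum
          have hsu : s < u := lt_of_le_of_lt hsm hum
          have husub : Icc s u ⊆ Icc s t' := Icc_subset_Icc le_rfl hu.2
          -- inner product lower bounds along [s,u]
          have hxs : ∀ x ∈ Icc s u, L^2/8 ≤ ⟪F x, F s⟫ := by
            intro x hx
            have := inner_lower (hspeed x) (hspeed s) (h58 x (husub hx))
            nlinarith [sq_nonneg L]
          have hxu : ∀ x ∈ Icc s u, L^2/8 ≤ ⟪F x, F u⟫ := by
            intro x hx
            have hn : ‖F x - F u‖ ≤ 5*L/4 := by
              have h1 := h58 x (husub hx)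
              have h2 := h58 u (husub ⟨hsu.le, le_refl u⟩)
              have h3 := norm_tri (F x) (F s) (F u)
              rw [norm_sub_rev (F s)] at h3
              linarith
            have := inner_lower (hspeed x) (hspeed u) hn
            nlinarith [sq_nonneg L]
          -- FTC for inner products
          have key : ∀ v : E2, ⟪γ u - γ s, v⟫ = ∫ x in s..u, ⟪F x, v⟫ := by
            intro v
            have hder : ∀ x ∈ uIcc s u, HasDerivAt (fun y => ⟪γ y, v⟫) (⟪F x, v⟫) x := by
              intro x _
              simpa using HasDerivAt.inner ℝ (hd x) (hasDerivAt_const x v)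
            have hint : IntervalIntegrable (fun x => ⟪F x, v⟫) MeasureTheory.volume s u :=
              (hdc.inner continuous_const).intervalIntegrable _ _
            rw [intervalIntegral.integral_eq_sub_of_hasDerivAt hder hint, inner_sub_left]
          have hlow : ∀ v : E2, (∀ x ∈ Icc s u, L^2/8 ≤ ⟪F x, v⟫) →
              L^2/8 * (u - s) ≤ ⟪γ u - γ s, v⟫ := by
            intro v hv
            rw [key v]
            have := intervalIntegral.integral_mono_on (μ := MeasureTheory.volume) hsu.le
              (intervalIntegrable_const) ((hdc.inner continuous_const).intervalIntegrable _ _) hv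
            rw [intervalIntegral.integral_const] at this
            calc L^2/8 * (u - s) = (u - s) • (L^2/8) := by rw [smul_eq_mul]; ring
            _ ≤ _ := this
          have hips : 0 < ⟪γ u - γ s, F s⟫ :=
            lt_of_lt_of_le (by nlinarith [sq_nonneg L, hsu]) (hlow (F s) hxs)
          have hipu : 0 < ⟪γ u - γ s, F u⟫ :=
            lt_of_lt_of_le (by nlinarith [sq_nonneg L, hsu]) (hlow (F u) hxu)
          have hc0 : γ u - γ s ≠ 0 := by
            intro hz
            rw [hz, inner_zero_left] at hips
            exact lt_irrefl 0 hips
          -- length of the chord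
          have hclen : ‖γ u - γ s‖ ≤ L * (u - s) := by
            have : γ u - γ s = ∫ x in s..u, F x := by
              rw [intervalIntegral.integral_eq_sub_of_hasDerivAt (fun x _ => hd x)
                (hdc.intervalIntegrable _ _)]
            rw [this]
            have := intervalIntegral.norm_integral_le_of_norm_le_const
              (C := L) (f := F) (a := s) (b := u) (fun x _ => le_of_eq (hspeed x))
            rwa [abs_of_nonneg (by linarith : (0:ℝ) ≤ u - s)] at this
          have hcle1 : ‖γ u - γ s‖ ≤ 1 := by
            have : L * (u - s) ≤ L * δ := by nlinarith [hu.2]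
            linarith [hclen, hLδ ▸ this]
          -- chord conditions at both endpoints
          have hchs : |⟪γ u - γ s, J (F s)⟫| ≤ L * ‖γ u - γ s‖^2 / 2 := hch s u
          have hchu : |⟪γ u - γ s, J (F u)⟫| ≤ L * ‖γ u - γ s‖^2 / 2 := by
            have := hch u s
            rw [show γ s - γ u = -(γ u - γ s) by abel, inner_neg_left, abs_neg, norm_neg] at this
            exact this
          have h1 := tangent_close hL (hspeed s) hc0 hcle1 hips hchs
          have h2 := tangent_close hL (hspeed u) hc0 hcle1 hipu hchu
          have htri := norm_tri (F u) ((L / ‖γ u - γ s‖) • (γ u - γ s)) (F s)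
          rw [norm_sub_rev ((L / ‖γ u - γ s‖) • (γ u - γ s))] at htri
          have : ‖F u - F s‖ ≤ 2 * (L * ‖γ u - γ s‖) := by linarith
          calc ‖F u - F s‖ ≤ 2 * (L * ‖γ u - γ s‖) := this
          _ ≤ 2 * (L * (L * (u - s))) := by nlinarith [hclen]
          _ = K * (u - s) := by rw [hKdef]; ring
      have : t' ≤ m := le_csSup hbdd ⟨⟨hst', ht'δ⟩, hext⟩
      linarith
  exact hmain.2 t ⟨hst, by linarith⟩

lemma lipschitz_of_local {f : ℝ → E2} {K δ : ℝ} (hδ : 0 < δ)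
    (h : ∀ s t : ℝ, s ≤ t → t - s ≤ δ → ‖f t - f s‖ ≤ K * (t - s)) :
    ∀ s t : ℝ, ‖f t - f s‖ ≤ K * |t - s| := by
  have main : ∀ n : ℕ, ∀ s t : ℝ, s ≤ t → t - s ≤ n * δ → ‖f t - f s‖ ≤ K * (t - s) := by
    intro n
    induction n with
    | zero =>
      intro s t hst h0
      simp only [Nat.cast_zero, zero_mul] at h0
      have : t = s := le_antisymm (by linarith) hst
      simp [this]
    | succ n ih =>
      intro s t hst hb
      by_cases hc : t - s ≤ δ
      · exact h s t hst hc
      · push_neg at hc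
        have h1 : s ≤ t - δ := by linarith
        have h2 : (t - δ) - s ≤ n * δ := by push_cast at hb ⊢; linarith
        have ha := ih s (t-δ) h1 h2
        have hb2 := h (t-δ) t (by linarith) (by linarith)
        have htri := norm_tri (f t) (f (t-δ)) (f s)
        have hr : K*(t - (t-δ)) + K*((t-δ) - s) = K*(t-s) := by ring
        linarith
  intro s t
  rcases le_total s t with hst | hts
  · obtain ⟨n, hn⟩ := exists_nat_ge ((t - s)/δ)
    have hnd : t - s ≤ n * δ := by rw [div_le_iff₀ hδ] at hn; linarith
    rw [abs_of_nonneg (by linarith)]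
    exact main n s t hst hnd
  · obtain ⟨n, hn⟩ := exists_nat_ge ((s - t)/δ)
    have hnd : s - t ≤ n * δ := by rw [div_le_iff₀ hδ] at hn; linarith
    rw [abs_of_nonpos (by linarith), norm_sub_rev]
    have := main n t s hts hnd
    linarith [this]

lemma chord_of_sep {γ : ℝ → E2} {L : ℝ} (hL : 0 < L) (hspeed : ∀ x, ‖deriv γ x‖ = L)
    (hsep : ∀ s t : ℝ, ∀ σ : ℝ, (σ = 1 ∨ σ = -1) →
      1 ≤ ‖γ t - (γ s + σ • (L⁻¹ • J (deriv γ s)))‖) :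
    ∀ s t : ℝ, |⟪γ t - γ s, J (deriv γ s)⟫| ≤ L * ‖γ t - γ s‖^2 / 2 := by
  intro s t
  apply chord_bound hL (hspeed s)
  · have h := hsep s t 1 (Or.inl rfl)
    have e : γ t - (γ s + (1:ℝ) • (L⁻¹ • J (deriv γ s)))
        = γ t - γ s - L⁻¹ • J (deriv γ s) := by
      rw [one_smul]; abel
    rwa [e] at h
  · have h := hsep s t (-1) (Or.inr rfl)
    have e : γ t - (γ s + (-1:ℝ) • (L⁻¹ • J (deriv γ s)))
        = γ t - γ s + L⁻¹ • J (deriv γ s) := by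
      rw [neg_one_smul]; abel
    rwa [e] at h

lemma periodic_fract {g : ℝ → E2} (hg : Function.Periodic g 1) (t : ℝ) :
    g (Int.fract t) = g t := by
  have h := hg.sub_int_mul_eq (x := t) ⌊t⌋
  rw [mul_one] at h
  rw [show Int.fract t = t - ⌊t⌋ from rfl]
  exact h

lemma loop_diff_bound {γ₁ γ₂ : ℝ → E2} {C : ℝ}
    (hd1 : ∀ x, HasDerivAt γ₁ (deriv γ₁ x) x) (hc1 : Continuous (deriv γ₁))
    (hd2 : ∀ x, HasDerivAt γ₂ (deriv γ₂ x) x) (hc2 : Continuous (deriv γ₂))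
    (hp1 : Function.Periodic γ₁ 1) (hp2 : Function.Periodic γ₂ 1)
    (h01 : γ₁ 0 = 0) (h02 : γ₂ 0 = 0)
    (hC : ∀ x ∈ Icc (0:ℝ) 1, ‖deriv γ₁ x - deriv γ₂ x‖ ≤ C) :
    ∀ t : ℝ, ‖γ₁ t - γ₂ t‖ ≤ C := by
  have hC0 : 0 ≤ C := le_trans (norm_nonneg _) (hC 0 ⟨le_refl 0, zero_le_one⟩)
  intro t
  set τ := Int.fract t with hτ
  have hτ0 : 0 ≤ τ := Int.fract_nonneg t
  have hτ1 : τ < 1 := Int.fract_lt_one t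
  have heq : γ₁ τ - γ₂ τ = ∫ x in (0:ℝ)..τ, (deriv γ₁ x - deriv γ₂ x) := by
    rw [intervalIntegral.integral_eq_sub_of_hasDerivAt
      (f := fun x => γ₁ x - γ₂ x) (fun x _ => (hd1 x).sub (hd2 x))
      ((hc1.sub hc2).intervalIntegrable _ _)]
    rw [h01, h02]
    abel
  have hbound : ‖γ₁ τ - γ₂ τ‖ ≤ C * |τ - 0| := by
    rw [heq]
    apply intervalIntegral.norm_integral_le_of_norm_le_const
    intro x hx
    rw [uIoc_of_le hτ0] at hx
    exact hC x ⟨hx.1.le, le_trans hx.2 hτ1.le⟩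
  rw [periodic_fract hp1 t, periodic_fract hp2 t] at hbound
  have : C * |τ - 0| ≤ C := by
    rw [sub_zero, abs_of_nonneg hτ0]
    nlinarith
  linarith

set_option maxHeartbeats 1000000 in
set_option synthInstance.maxHeartbeats 400000 in
/-- **Compactness of loops satisfying the separation bound** (key step of
Theorems 3.3 and 4.1).  A sequence of C¹ `1`-periodic constant-speed loops based at
the origin, with speeds in `[a, b]` and satisfying the separation bound, has a
subsequence converging in C¹ (uniformly together with derivatives) to a C¹
`1`-periodic constant-speed loop which also satisfies the separation bound. -/
theorem compactness_of_separation_loops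
    (a b : ℝ) (ha : 0 < a) (hab : a ≤ b)
    (γ : ℕ → ℝ → EuclideanSpace ℝ (Fin 2)) (Lseq : ℕ → ℝ)
    (hC1 : ∀ i, ContDiff ℝ 1 (γ i))
    (hper : ∀ i, Function.Periodic (γ i) 1)
    (hL : ∀ i, Lseq i ∈ Set.Icc a b)
    (hspeed : ∀ i s, ‖deriv (γ i) s‖ = Lseq i)
    (h0 : ∀ i, γ i 0 = 0)
    (hsep : ∀ i, ∀ s t : ℝ, ∀ σ : ℝ, (σ = 1 ∨ σ = -1) →
      1 ≤ ‖γ i t - (γ i s + σ • ((Lseq i)⁻¹ • J (deriv (γ i) s)))‖) :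
    ∃ φ : ℕ → ℕ, StrictMono φ ∧
    ∃ g : ℝ → EuclideanSpace ℝ (Fin 2), ∃ L ∈ Set.Icc a b,
      ContDiff ℝ 1 g ∧ Function.Periodic g 1 ∧ g 0 = 0 ∧
      (∀ s, ‖deriv g s‖ = L) ∧
      (∀ s t : ℝ, ∀ σ : ℝ, (σ = 1 ∨ σ = -1) →
        1 ≤ ‖g t - (g s + σ • (L⁻¹ • J (deriv g s)))‖) ∧
      TendstoUniformly (fun n => γ (φ n)) g Filter.atTop ∧
      TendstoUniformly (fun n => deriv (γ (φ n))) (deriv g) Filter.atTop := by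
  have hLpos : ∀ i, 0 < Lseq i := fun i => lt_of_lt_of_le ha (hL i).1
  set F : ℕ → ℝ → E2 := fun i => deriv (γ i) with hFdef
  have hFd : ∀ i x, HasDerivAt (γ i) (F i x) x := fun i x =>
    (((hC1 i).differentiable one_ne_zero) x).hasDerivAt
  have hFc : ∀ i, Continuous (F i) := fun i => (hC1 i).continuous_deriv le_rfl
  have hFper : ∀ i, Function.Periodic (F i) 1 := by
    intro i x
    have h1 : deriv (fun y => γ i (y + 1)) x = deriv (γ i) (x + 1) :=
      deriv_comp_add_const (γ i) 1 x
    have h2 : (fun y => γ i (y + 1)) = γ i := funext fun y => hper i y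
    rw [h2] at h1
    exact h1.symm
  -- uniform Lipschitz bound for the derivatives
  have hlip : ∀ i, ∀ s t : ℝ, ‖F i t - F i s‖ ≤ (2*b^2) * |t - s| := by
    intro i
    have hb : 0 < b := lt_of_lt_of_le ha hab
    apply lipschitz_of_local (δ := 1/(4*b)) (by positivity)
    intro s t hst hts
    have hb4 : (1:ℝ)/(4*b) ≤ 1/(4*(Lseq i)) := by
      apply one_div_le_one_div_of_le (by linarith [hLpos i])
      nlinarith [(hL i).2]
    have hloc := local_lipschitz (hLpos i) (hFd i) (hFc i) (hspeed i)
      (chord_of_sep (hLpos i) (hspeed i) (hsep i)) s t hst (by linarith)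
    calc ‖F i t - F i s‖ ≤ 2*(Lseq i)^2*(t-s) := hloc
    _ ≤ 2*b^2*(t-s) := by
        nlinarith [mul_nonneg (sub_nonneg.mpr (by nlinarith [(hL i).2, (hL i).1] :
          (Lseq i)^2 ≤ b^2)) (sub_nonneg.mpr hst)]
  -- Arzelà–Ascoli on the derivatives restricted to [0,1]
  haveI : CompactSpace (Icc (0:ℝ) 1) := isCompact_iff_compactSpace.mp isCompact_Icc
  set Fb : ℕ → BoundedContinuousFunction (Icc (0:ℝ) 1) E2 := fun i =>
    BoundedContinuousFunction.mkOfCompact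
      ⟨fun x => F i x.1, (hFc i).comp continuous_subtype_val⟩ with hFbdef
  have hFbapp : ∀ i x, Fb i x = F i x.1 := fun i x => rfl
  have hA : IsCompact (closure (Set.range Fb)) := by
    apply BoundedContinuousFunction.arzela_ascoli (Metric.closedBall (0:E2) b)
      (isCompact_closedBall 0 b)
    · rintro f x ⟨i, rfl⟩
      rw [Metric.mem_closedBall, dist_zero_right, hFbapp, hFdef]
      rw [hspeed i x.1]
      exact (hL i).2
    · apply Metric.equicontinuous_of_continuity_modulus (fun d => 2*b^2*d)
      · have hc : Continuous fun d : ℝ => 2*b^2*d := by continuity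
        simpa using hc.tendsto 0
      · rintro x y ⟨f, ⟨i, rfl⟩⟩
        rw [hFbapp, hFbapp, dist_eq_norm, Subtype.dist_eq, Real.dist_eq]
        exact hlip i y.1 x.1
  obtain ⟨f, -, φ, hφ, hconv⟩ := hA.tendsto_subseq (fun n => subset_closure ⟨n, rfl⟩)
  have hconvU : TendstoUniformly (fun n => (Fb (φ n) : Icc (0:ℝ) 1 → E2)) f atTop :=
    BoundedContinuousFunction.tendsto_iff_tendstoUniformly.mp hconv
  -- the limit derivative, extended periodically to ℝ
  have hfract_mem : ∀ t : ℝ, Int.fract t ∈ Icc (0:ℝ) 1 :=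
    fun t => ⟨Int.fract_nonneg t, (Int.fract_lt_one t).le⟩
  set h : ℝ → E2 := fun t => f ⟨Int.fract t, hfract_mem t⟩ with hhdef
  have hFconv : TendstoUniformly (fun n => F (φ n)) h atTop := by
    rw [Metric.tendstoUniformly_iff]
    intro ε hε
    filter_upwards [Metric.tendstoUniformly_iff.mp hconvU ε hε] with n hn t
    have h1 := hn ⟨Int.fract t, hfract_mem t⟩
    rw [hFbapp] at h1
    simpa [hhdef, periodic_fract (hFper (φ n)) t] using h1
  -- uniform Cauchy property of the loops
  have hγcauchy : UniformCauchySeqOn (fun n => γ (φ n)) atTop Set.univ := by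
    rw [Metric.uniformCauchySeqOn_iff]
    intro ε hε
    obtain ⟨N, hN⟩ := Filter.eventually_atTop.mp
      (Metric.tendstoUniformly_iff.mp hFconv (ε/3) (by linarith))
    refine ⟨N, fun m hm n hn x _ => ?_⟩
    have hdiff : ∀ y ∈ Icc (0:ℝ) 1, ‖F (φ m) y - F (φ n) y‖ ≤ 2*ε/3 := by
      intro y _
      have h1 := hN m hm y
      have h2 := hN n hn y
      rw [dist_eq_norm] at h1 h2
      have htri := norm_tri (F (φ m) y) (h y) (F (φ n) y)
      rw [norm_sub_rev (F (φ m) y) (h y)] at htri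
      linarith
    have := loop_diff_bound (hFd (φ m)) (hFc (φ m)) (hFd (φ n)) (hFc (φ n))
      (hper (φ m)) (hper (φ n)) (h0 (φ m)) (h0 (φ n)) hdiff x
    rw [dist_eq_norm]
    linarith
  -- pointwise limit of the loops
  have hptc : ∀ t : ℝ, ∃ z : E2, Filter.Tendsto (fun n => γ (φ n) t) atTop (nhds z) := by
    intro t
    apply cauchySeq_tendsto_of_complete
    rw [Metric.cauchySeq_iff]
    intro ε hε
    obtain ⟨N, hN⟩ := Metric.uniformCauchySeqOn_iff.mp hγcauchy ε hε
    exact ⟨N, fun m hm n hn => hN m hm n hn t (Set.mem_univ t)⟩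
  choose g hg using hptc
  have hγconv : TendstoUniformly (fun n => γ (φ n)) g atTop := by
    rw [← tendstoUniformlyOn_univ]
    exact hγcauchy.tendstoUniformlyOn_of_tendsto (fun t _ => hg t)
  have hgd : ∀ x : ℝ, HasDerivAt g (h x) x :=
    fun x => hasDerivAt_of_tendstoUniformly hFconv
      (Filter.Eventually.of_forall (fun n => hFd (φ n))) hg x
  have hderiv_g : deriv g = h := funext fun x => (hgd x).deriv
  have hhc : Continuous h := hFconv.continuous (Filter.Eventually.of_forall fun n => hFc (φ n)).frequently
  have hgC1 : ContDiff ℝ 1 g := contDiff_one_iff_deriv.mpr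
    ⟨fun x => (hgd x).differentiableAt, by rw [hderiv_g]; exact hhc⟩
  have hLconv : ∀ s : ℝ, Filter.Tendsto (fun n => Lseq (φ n)) atTop (nhds ‖h s‖) := by
    intro s
    have h1 : Filter.Tendsto (fun n => ‖F (φ n) s‖) atTop (nhds ‖h s‖) :=
      (hFconv.tendsto_at s).norm
    have h2 : (fun n => ‖F (φ n) s‖) = fun n => Lseq (φ n) := funext fun n => hspeed (φ n) s
    rwa [h2] at h1
  set L : ℝ := ‖h 0‖ with hLdef
  have hnormh : ∀ s, ‖h s‖ = L := fun s => tendsto_nhds_unique (hLconv s) (hLconv 0)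
  have hLa : a ≤ L := ge_of_tendsto (hLconv 0) (Filter.Eventually.of_forall fun n => (hL (φ n)).1)
  have hLb : L ≤ b := le_of_tendsto (hLconv 0) (Filter.Eventually.of_forall fun n => (hL (φ n)).2)
  have hL0 : 0 < L := lt_of_lt_of_le ha hLa
  have hg0 : g 0 = 0 := by
    apply tendsto_nhds_unique (hg 0)
    have he : (fun n => γ (φ n) 0) = fun _ => (0:E2) := funext fun n => h0 (φ n)
    rw [he]; exact tendsto_const_nhds
  have hgper : Function.Periodic g 1 := by
    intro x
    apply tendsto_nhds_unique (hg (x+1))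
    have he : (fun n => γ (φ n) (x+1)) = fun n => γ (φ n) x := funext fun n => hper (φ n) x
    rw [he]; exact hg x
  have hgspeed : ∀ s, ‖deriv g s‖ = L := by intro s; rw [hderiv_g]; exact hnormh s
  refine ⟨φ, hφ, g, L, ⟨hLa, hLb⟩, hgC1, hgper, hg0, hgspeed, ?_, hγconv, ?_⟩
  · intro s t σ hσ
    rw [hderiv_g]
    have hterm : Filter.Tendsto
        (fun n => ‖γ (φ n) t - (γ (φ n) s + σ • ((Lseq (φ n))⁻¹ • J (F (φ n) s)))‖)
        atTop (nhds ‖g t - (g s + σ • (L⁻¹ • J (h s)))‖) := by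
      apply Filter.Tendsto.norm
      apply Filter.Tendsto.sub (hg t)
      apply Filter.Tendsto.add (hg s)
      apply Filter.Tendsto.const_smul
      have hinv : Filter.Tendsto (fun n => (Lseq (φ n))⁻¹) atTop (nhds L⁻¹) :=
        (hLconv 0).inv₀ hL0.ne'
      have hJ : Filter.Tendsto (fun n => J (F (φ n) s)) atTop (nhds (J (h s))) :=
        (J_continuous.tendsto (h s)).comp (hFconv.tendsto_at s)
      exact hinv.smul hJ
    exact ge_of_tendsto hterm (Filter.Eventually.of_forall fun n => hsep (φ n) s t σ hσ)
  · rw [hderiv_g]; exact hFconv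

end
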